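/- Let G be a vertex-weighted undirected graph having a domino tree decomposition (elongation at most 1) of width k, and let t ≥ 2 be an integer. Set a = ⌈k/2⌉. If a ≤ 1, then G has a (t, (4t-3)(k+1))-trimming; if a ≥ 2, then G has a (t, g)-trimming with g = ((k+1)(a^{2t-2}(a+1) - 2))/(a-1). -/

import Mathlib

open scoped Classical

/-- A tree decomposition of a graph `G`. -/
structure TreeDecomp (V : Type) (G : SimpleGraph V) where
  X : Type
  T : SimpleGraph X
  tree : T.IsTree
  B : X → Finset V
  cover : ∀ v : V, ∃ x : X, v ∈ B x
  edges : ∀ u v : V, G.Adj u v → ∃ x : X, u ∈ B x ∧ v ∈ B x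
  subtree : ∀ (v : V) (x y z : X) (p : T.Walk x z), p.IsPath → y ∈ p.support →
    v ∈ B x → v ∈ B z → v ∈ B y

/-- A `(t,g)`-trimming of a vertex-weighted graph. -/
def IsTrimming {V : Type} [Fintype V] (G : SimpleGraph V) (w : V → ℝ)
    (t g : ℝ) (U : Finset V) : Prop :=
  (∑ v ∈ U, w v) ≤ (∑ v, w v) / t ∧
    ∀ (u v : V) (p : G.Walk u v), p.IsPath → (p.length : ℝ) > g →
      ∃ x ∈ p.support, x ∈ U

namespace DominoAux
open SimpleGraph Finset
variable {X : Type} [DecidableEq X] {T : SimpleGraph X}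
noncomputable def pth (hT : T.IsTree) (u v : X) : T.Walk u v :=
  (hT.existsUnique_path u v).exists.choose
lemma pth_isPath (hT : T.IsTree) (u v : X) : (pth hT u v).IsPath :=
  (hT.existsUnique_path u v).exists.choose_spec
lemma pth_unique (hT : T.IsTree) {u v : X} {p : T.Walk u v} (hp : p.IsPath) :
    p = pth hT u v := by
  obtain ⟨q, _, hq⟩ := hT.existsUnique_path u v
  rw [hq p hp, hq _ (pth_isPath hT u v)]
lemma isPath_length_eq_dist (hT : T.IsTree) {u v : X} {p : T.Walk u v} (hp : p.IsPath) :
    p.length = T.dist u v := by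
  obtain ⟨q, hq⟩ := hT.isConnected.exists_walk_length_eq_dist u v
  have hb : q.bypass.IsPath := q.bypass_isPath
  have h1 : q.bypass.length ≤ q.length := q.length_bypass_le
  have hd : T.dist u v ≤ q.bypass.length := dist_le q.bypass
  have hpb : p = q.bypass := (pth_unique hT hp).trans (pth_unique hT hb).symm
  rw [hpb]; omega
lemma supp_takeUntil_prefix {u v z : X} (p : T.Walk u v) (h : z ∈ p.support) :
    (p.takeUntil z h).support <+: p.support :=
  ⟨(p.dropUntil z h).support.tail, by rw [← Walk.support_append, Walk.take_spec]⟩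
variable (hT : T.IsTree) (r : X)
lemma uniq_depth {x z z' : X} (hz : z ∈ (pth hT r x).support)
    (hz' : z' ∈ (pth hT r x).support) (hd : T.dist r z = T.dist r z') : z = z' := by
  set P := pth hT r x with hP
  have h1 : (P.takeUntil z hz).IsPath := (pth_isPath hT r x).takeUntil hz
  have h2 : (P.takeUntil z' hz').IsPath := (pth_isPath hT r x).takeUntil hz'
  have l1 : (P.takeUntil z hz).length = T.dist r z := isPath_length_eq_dist hT h1
  have l2 : (P.takeUntil z' hz').length = T.dist r z' := isPath_length_eq_dist hT h2
  have p1 := supp_takeUntil_prefix P hz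
  have p2 := supp_takeUntil_prefix P hz'
  have hlen : (P.takeUntil z hz).support.length = (P.takeUntil z' hz').support.length := by
    rw [Walk.length_support, Walk.length_support, l1, l2, hd]
  have heq : (P.takeUntil z hz).support = (P.takeUntil z' hz').support := by
    rw [List.prefix_iff_eq_take.mp p1, List.prefix_iff_eq_take.mp p2, hlen]
  have g1 := Walk.getLast_support (P.takeUntil z hz)
  have g2 := Walk.getLast_support (P.takeUntil z' hz')
  rw [← g1, ← g2]; congr 1
lemma dist_split {x z : X} (hz : z ∈ (pth hT r x).support) :
    T.dist r x = T.dist r z + T.dist z x := by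
  set P := pth hT r x with hP
  have := congrArg Walk.length (P.take_spec hz)
  rw [Walk.length_append] at this
  have l1 : (P.takeUntil z hz).length = T.dist r z :=
    isPath_length_eq_dist hT ((pth_isPath hT r x).takeUntil hz)
  have l2 : (P.dropUntil z hz).length = T.dist z x :=
    isPath_length_eq_dist hT ((pth_isPath hT r x).dropUntil hz)
  have l3 : P.length = T.dist r x := isPath_length_eq_dist hT (pth_isPath hT r x)
  omega

lemma pth_mono {x z : X} (hz : z ∈ (pth hT r x).support) :
    (pth hT r z).support ⊆ (pth hT r x).support := by
  have h : (pth hT r x).takeUntil z hz = pth hT r z :=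
    pth_unique hT ((pth_isPath hT r x).takeUntil hz)
  rw [← h]
  exact Walk.support_takeUntil_subset _ hz

lemma adj_cases {x y : X} (hadj : T.Adj x y) :
    (y ∈ (pth hT r x).support ∧ T.dist r x = T.dist r y + 1) ∨
    (x ∈ (pth hT r y).support ∧ T.dist r y = T.dist r x + 1) := by
  by_cases hx : x ∈ (pth hT r y).support
  · right
    refine ⟨hx, ?_⟩
    have := dist_split hT r hx
    have h1 : T.dist x y = 1 := dist_eq_one_iff_adj.mpr hadj
    omega
  · left
    have hpy : (pth hT r y).IsPath := pth_isPath hT r y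
    have hW : ((pth hT r y).concat hadj.symm).IsPath := by
      rw [Walk.isPath_def, Walk.support_concat]
      rw [List.nodup_append']
      refine ⟨hpy.support_nodup, List.nodup_singleton x, ?_⟩
      intro b hb hb'
      simp only [List.mem_singleton] at hb'
      subst hb'
      exact hx hb
    have heq : (pth hT r y).concat hadj.symm = pth hT r x := pth_unique hT hW
    constructor
    · rw [← heq, Walk.support_concat]
      exact List.mem_append_left _ (Walk.end_mem_support _)
    · have : ((pth hT r y).concat hadj.symm).length = (pth hT r y).length + 1 :=
        Walk.length_concat _ _
      have l1 : (pth hT r x).length = T.dist r x := isPath_length_eq_dist hT (pth_isPath hT r x)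
      have l2 : (pth hT r y).length = T.dist r y := isPath_length_eq_dist hT hpy
      rw [heq] at this
      omega

lemma support_of_length_one {u v : X} (W : T.Walk u v) (h : W.length = 1) :
    W.support = [u, v] := by
  cases W with
  | nil => simp at h
  | cons hadj q =>
    cases q with
    | nil => simp
    | cons h2 q2 => simp [Walk.length_cons] at h

lemma mem_pth_of_parent {x y z : X} (hx : x ∈ (pth hT r y).support)
    (hd : T.dist r y = T.dist r x + 1) (hz : z ∈ (pth hT r y).support) :
    z ∈ (pth hT r x).support ∨ z = y := by
  rw [← Walk.take_spec (pth hT r y) hx, Walk.mem_support_append_iff] at hz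
  rcases hz with hz | hz
  · left
    have h : (pth hT r y).takeUntil x hx = pth hT r x :=
      pth_unique hT ((pth_isPath hT r y).takeUntil hx)
    rwa [h] at hz
  · have hsplit := dist_split hT r hx
    have hlen : ((pth hT r y).dropUntil x hx).length = T.dist x y :=
      isPath_length_eq_dist hT ((pth_isPath hT r y).dropUntil hx)
    have hxy : T.dist x y = 1 := by omega
    rw [support_of_length_one _ (by omega)] at hz
    rcases List.mem_pair.mp hz with h | h
    · left; rw [h]; exact Walk.end_mem_support _
    · right; exact h

/-- the minimum-depth vertex of a walk lies on the root path of the start -/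
lemma min_mem_pth {x y z : X} (W : T.Walk x y) (hz : z ∈ W.support)
    (hmin : ∀ z' ∈ W.support, T.dist r z ≤ T.dist r z') :
    z ∈ (pth hT r x).support := by
  induction W with
  | nil =>
    rw [Walk.support_nil, List.mem_singleton] at hz
    rw [hz]; exact Walk.end_mem_support _
  | @cons u u' v hadj W' ih =>
    rw [Walk.support_cons, List.mem_cons] at hz
    rcases hz with hz | hz
    · rw [hz]; exact Walk.end_mem_support _
    · have hmin' : ∀ z' ∈ W'.support, T.dist r z ≤ T.dist r z' := fun z' hz' =>
        hmin z' (by rw [Walk.support_cons]; exact List.mem_cons_of_mem _ hz')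
      have hz1 : z ∈ (pth hT r u').support := ih hz hmin'
      rcases adj_cases hT r hadj with ⟨h1, _⟩ | ⟨h1, h2⟩
      · exact pth_mono hT r h1 hz1
      · rcases mem_pth_of_parent hT r h1 h2 hz1 with h | h
        · exact h
        · exfalso
          have := hmin u (Walk.start_mem_support _)
          rw [h] at this
          omega

/-- separator property: a non-ancestor vertex on a walk is entered from its parent -/
lemma exists_parent_step (x₀ : X) {x y z : X} (W : T.Walk x y) (hz : z ∈ W.support)
    (hnsp : z ∉ (pth hT r x).support) :
    ∃ i, i + 1 < W.support.length ∧ W.support.getD (i+1) x₀ = z ∧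
      T.dist r (W.support.getD i x₀) + 1 = T.dist r z := by
  induction W with
  | nil =>
    exfalso
    rw [Walk.support_nil, List.mem_singleton] at hz
    rw [hz] at hnsp
    exact hnsp (Walk.end_mem_support _)
  | @cons u u' v hadj W' ih =>
    rw [Walk.support_cons, List.mem_cons] at hz
    rcases hz with hz | hz
    · exfalso; rw [hz] at hnsp; exact hnsp (Walk.end_mem_support _)
    by_cases hz1 : z ∈ (pth hT r u').support
    · rcases adj_cases hT r hadj with ⟨h1, _⟩ | ⟨h1, h2⟩
      · exact absurd (pth_mono hT r h1 hz1) hnsp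
      · rcases mem_pth_of_parent hT r h1 h2 hz1 with h | h
        · exact absurd h hnsp
        · refine ⟨0, ?_, ?_, ?_⟩
          · rw [Walk.support_cons]
            simp only [List.length_cons]
            have := W'.support_ne_nil
            have := List.length_pos_of_ne_nil this
            omega
          · rw [Walk.support_cons, List.getD_cons_succ]
            rw [Walk.support_eq_cons W', List.getD_cons_zero, ← h]
          · rw [Walk.support_cons, List.getD_cons_zero, h, h2]
    · obtain ⟨i, h1, h2, h3⟩ := ih hz hz1
      refine ⟨i + 1, ?_, ?_, ?_⟩
      · rw [Walk.support_cons]; simpa using Nat.succ_lt_succ h1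
      · rw [Walk.support_cons, List.getD_cons_succ]; exact h2
      · rw [Walk.support_cons, List.getD_cons_succ]; exact h3

lemma card_filter_getD_eq_count {α : Type*} [DecidableEq α] (l : List α) (x₀ p : α) :
    ((Finset.range l.length).filter (fun i => l.getD i x₀ = p)).card = l.count p := by
  induction l with
  | nil => simp
  | cons a tl ih =>
    rw [Finset.card_filter, List.length_cons, Finset.sum_range_succ']
    simp only [List.getD_cons_succ, List.getD_cons_zero]
    rw [← Finset.card_filter, ih, List.count_cons]
    by_cases h : a = p <;> simp [h, beq_iff_eq]

include hT in
/-- Counting distinct vertices of a banded walk with bounded multiplicity in a tree. -/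
lemma walk_band_count {x y : X} (W : T.Walk x y) (a h ℓ : ℕ)
    (hcount : ∀ z, W.support.count z ≤ a)
    (hband : ∀ z ∈ W.support, ℓ ≤ T.dist r z ∧ T.dist r z < ℓ + h) :
    W.support.toFinset.card ≤ ∑ j ∈ Finset.range h, ∑ i ∈ Finset.range (j+1), a ^ i := by
  classical
  have hx : x ∈ W.support := Walk.start_mem_support _
  have hne : (W.support.toFinset.image (T.dist r)).Nonempty :=
    ⟨T.dist r x, Finset.mem_image_of_mem _ (by simpa using hx)⟩
  set m := (W.support.toFinset.image (T.dist r)).min' hne with hm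
  have hmle : ∀ z ∈ W.support, m ≤ T.dist r z := fun z hz =>
    Finset.min'_le _ _ (Finset.mem_image_of_mem _ (by simpa using hz))
  obtain ⟨z₀, hz₀mem, hz₀⟩ := Finset.mem_image.mp ((W.support.toFinset.image (T.dist r)).min'_mem hne)
  rw [List.mem_toFinset] at hz₀mem
  set F : ℕ → Finset X := fun j => W.support.toFinset.filter (fun z => T.dist r z = m + j) with hF
  -- F 0 has at most one element
  have hF0 : (F 0).card ≤ 1 := by
    rw [Finset.card_le_one]
    intro z hz z' hz'
    simp only [hF, Finset.mem_filter, List.mem_toFinset] at hz hz'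
    have h1 : z ∈ (pth hT r x).support :=
      min_mem_pth hT r W hz.1 (fun z' hz'' => by rw [hz.2]; simpa using hmle z' hz'')
    have h2 : z' ∈ (pth hT r x).support :=
      min_mem_pth hT r W hz'.1 (fun z'' hz'' => by rw [hz'.2]; simpa using hmle z'' hz'')
    exact uniq_depth hT r h1 h2 (by rw [hz.2, hz'.2])
  -- inductive bound on levels
  have hstep : ∀ j, (F (j+1)).card ≤ a * (F j).card + 1 := by
    intro j
    set spec := (F (j+1)).filter (fun z => z ∈ (pth hT r x).support) with hspec
    set nonspec := (F (j+1)).filter (fun z => z ∉ (pth hT r x).support) with hnonspec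
    have hsplit : F (j+1) = spec ∪ nonspec := (Finset.filter_union_filter_not_eq _ _).symm
    have hspec1 : spec.card ≤ 1 := by
      rw [Finset.card_le_one]
      intro z hz z' hz'
      simp only [hspec, hF, Finset.mem_filter, List.mem_toFinset] at hz hz'
      exact uniq_depth hT r hz.2 hz'.2 (by rw [hz.1.2, hz'.1.2])
    set J := (Finset.range W.support.length).filter (fun i => W.support.getD i x ∈ F j) with hJ
    have hJcard : J.card ≤ (F j).card * a := by
      have hbij : J = (F j).biUnion (fun p =>
          (Finset.range W.support.length).filter (fun i => W.support.getD i x = p)) := by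
        ext i
        simp only [hJ, Finset.mem_filter, Finset.mem_biUnion, Finset.mem_range]
        constructor
        · rintro ⟨h1, h2⟩; exact ⟨_, h2, h1, rfl⟩
        · rintro ⟨p, hp, h1, h2⟩; exact ⟨h1, h2 ▸ hp⟩
      rw [hbij]
      calc ((F j).biUnion _).card
          ≤ ∑ p ∈ F j, ((Finset.range W.support.length).filter
              (fun i => W.support.getD i x = p)).card := Finset.card_biUnion_le
        _ ≤ ∑ _p ∈ F j, a := by
            refine Finset.sum_le_sum fun p _ => ?_
            rw [card_filter_getD_eq_count W.support x p]
            exact hcount p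
        _ = (F j).card * a := by rw [Finset.sum_const, smul_eq_mul]
    have hnsJ : nonspec.card ≤ J.card := by
      have hmap : ∀ z ∈ nonspec, ∃ i ∈ J, W.support.getD (i+1) x = z := by
        intro z hz
        simp only [hnonspec, hF, Finset.mem_filter, List.mem_toFinset] at hz
        obtain ⟨⟨hzmem, hzd⟩, hzns⟩ := hz
        obtain ⟨i, hi1, hi2, hi3⟩ := exists_parent_step hT r x W hzmem hzns
        refine ⟨i, ?_, hi2⟩
        simp only [hJ, Finset.mem_filter, Finset.mem_range]
        constructor
        · omega
        · simp only [hF, Finset.mem_filter, List.mem_toFinset]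
          constructor
          · rw [List.getD_eq_getElem _ _ (by omega)]
            exact List.getElem_mem _
          · omega
      choose φ hφJ hφz using hmap
      have : nonspec.card ≤ J.card := Finset.card_le_card_of_injOn
        (fun z => if hz : z ∈ nonspec then φ z hz else 0)
        (fun z hz => by simp only [Finset.mem_coe] at hz ⊢; simp only [dif_pos hz]; exact hφJ z hz)
        (by
          intro z hz z' hz' heq
          dsimp only at heq
          have hz2 := Finset.mem_coe.mp hz
          have hz2' := Finset.mem_coe.mp hz'
          rw [dif_pos hz2, dif_pos hz2'] at heq
          rw [← hφz z hz2, ← hφz z' hz2', heq])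
      exact this
    calc (F (j+1)).card ≤ spec.card + nonspec.card := by
          rw [hsplit]; exact Finset.card_union_le _ _
      _ ≤ 1 + (F j).card * a := Nat.add_le_add hspec1 (hnsJ.trans hJcard)
      _ = a * (F j).card + 1 := by ring
  have hSj : ∀ j, (F j).card ≤ ∑ i ∈ Finset.range (j+1), a ^ i := by
    intro j
    induction j with
    | zero => simpa using hF0
    | succ j ih =>
      calc (F (j+1)).card ≤ a * (F j).card + 1 := hstep j
        _ ≤ a * (∑ i ∈ Finset.range (j+1), a ^ i) + 1 :=
            Nat.add_le_add_right (Nat.mul_le_mul_left a ih) 1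
        _ = ∑ i ∈ Finset.range (j+2), a ^ i := by
            rw [Finset.sum_range_succ' (fun i => a ^ i) (j+1)]
            simp [Finset.mul_sum, pow_succ, mul_comm]
  have hlm : ℓ ≤ m := by
    have := (hband z₀ hz₀mem).1
    omega
  have hsub : W.support.toFinset ⊆ (Finset.range h).biUnion F := by
    intro z hz
    rw [List.mem_toFinset] at hz
    have h1 := hmle z hz
    have h2 := (hband z hz).2
    have h3 := (hband z hz).1
    refine Finset.mem_biUnion.mpr ⟨T.dist r z - m, Finset.mem_range.mpr (by omega), ?_⟩
    simp only [hF, Finset.mem_filter, List.mem_toFinset]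
    exact ⟨hz, by omega⟩
  calc W.support.toFinset.card ≤ ((Finset.range h).biUnion F).card := Finset.card_le_card hsub
    _ ≤ ∑ j ∈ Finset.range h, (F j).card := Finset.card_biUnion_le
    _ ≤ ∑ j ∈ Finset.range h, ∑ i ∈ Finset.range (j+1), a ^ i :=
        Finset.sum_le_sum fun j _ => hSj j


/-- building a walk in the tree from a lazy sequence of adjacent-or-equal nodes,
with occurrence counts equal to the number of runs. -/
lemma exists_dedup_walk (c : ℕ → X) (n : ℕ)
    (hstep : ∀ j < n, c j = c (j+1) ∨ T.Adj (c j) (c (j+1))) :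
    ∃ Q : T.Walk (c 0) (c n),
      (∀ z, Q.support.count z =
        ((Finset.range (n+1)).filter (fun j => c j = z ∧ (j = 0 ∨ c (j-1) ≠ z))).card) ∧
      (∀ j ≤ n, c j ∈ Q.support) := by
  induction n with
  | zero =>
    refine ⟨Walk.nil, fun z => ?_, fun j hj => ?_⟩
    · rw [Walk.support_nil]
      rw [show (0:ℕ)+1 = 1 from rfl, Finset.range_one, Finset.filter_singleton]
      by_cases h : c 0 = z
      · simp [h]
      · simp [h, List.count_singleton']
    · have : j = 0 := by omega
      subst this
      exact Walk.start_mem_support _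
  | succ n ih =>
    obtain ⟨Q, hcnt, hmem⟩ := ih (fun j hj => hstep j (by omega))
    by_cases heq : c n = c (n+1)
    · refine ⟨Q.copy rfl heq, fun z => ?_, fun j hj => ?_⟩
      · rw [Walk.support_copy]
        rw [hcnt z]
        congr 1
        conv_rhs => rw [Finset.range_add_one, Finset.filter_insert]
        have hng : ¬(c (n+1) = z ∧ (n+1 = 0 ∨ c (n+1-1) ≠ z)) := by
          rintro ⟨h1, h2⟩
          rcases h2 with h2 | h2
          · omega
          · simp only [Nat.add_sub_cancel] at h2
            exact h2 (heq.trans h1)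
        rw [if_neg hng]
      · rw [Walk.support_copy]
        rcases Nat.lt_or_ge j (n+1) with h | h
        · exact hmem j (by omega)
        · have : j = n + 1 := by omega
          rw [this, ← heq]
          exact hmem n le_rfl
    · have hadj : T.Adj (c n) (c (n+1)) := (hstep n (by omega)).resolve_left heq
      refine ⟨Q.concat hadj, fun z => ?_, fun j hj => ?_⟩
      · rw [Walk.support_concat, List.count_append, hcnt z]
        conv_rhs => rw [Finset.range_add_one, Finset.filter_insert]
        by_cases h : c (n+1) = z
        · have : (c (n+1) = z ∧ (n+1 = 0 ∨ c (n+1-1) ≠ z)) := by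
            refine ⟨h, Or.inr ?_⟩
            simp only [Nat.add_sub_cancel]
            exact fun hh => heq (hh.trans h.symm)
          rw [if_pos this, Finset.card_insert_of_notMem (by simp), h]
          simp [List.count_singleton, add_comm]
        · have : ¬(c (n+1) = z ∧ (n+1 = 0 ∨ c (n+1-1) ≠ z)) := fun hh => h hh.1
          rw [if_neg this]
          simp [List.count_singleton, h]
      · rw [Walk.support_concat]
        rcases Nat.lt_or_ge j (n+1) with hlt | hge
        · exact List.mem_append_left _ (hmem j (by omega))
        · have : j = n + 1 := by omega
          rw [this]
          exact List.mem_append_right _ (by simp)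

/-- all elements of a slowly-varying nat list lie strictly on one side of a missing value -/
lemma chain_one_side {l : List ℕ} (hc : List.Chain' (fun p q => p ≤ q + 1 ∧ q ≤ p + 1) l)
    {c : ℕ} (hnot : c ∉ l) : (∀ e ∈ l, e < c) ∨ (∀ e ∈ l, c < e) := by
  induction l with
  | nil => left; simp
  | cons a tl ih =>
    have hnt : c ∉ tl := fun h => hnot (List.mem_cons_of_mem _ h)
    have hna : a ≠ c := fun h => hnot (h ▸ List.mem_cons_self)
    have htl := ih (hc.tail) hnt
    cases tl with
    | nil =>
      rcases Nat.lt_or_ge a c with h | h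
      · left; intro e he; simp at he; omega
      · right; intro e he; simp at he; omega
    | cons b tl2 =>
      have hab : a ≤ b + 1 ∧ b ≤ a + 1 := (List.isChain_cons_cons.mp hc).1
      have hnb : b ≠ c := fun h => hnot (by simp [h])
      rcases htl with h | h
      · left
        intro e he
        rcases List.mem_cons.mp he with he | he
        · have hb := h b (List.mem_cons_self)
          subst he; omega
        · exact h e he
      · right
        intro e he
        rcases List.mem_cons.mp he with he | he
        · have hb := h b (List.mem_cons_self)
          subst he; omega
        · exact h e he

lemma chain_ivt {l : List ℕ} (hc : List.Chain' (fun p q => p ≤ q + 1 ∧ q ≤ p + 1) l)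
    {p q c : ℕ} (hp : p ∈ l) (hq : q ∈ l) (h1 : p ≤ c) (h2 : c ≤ q) : c ∈ l := by
  by_contra hnot
  rcases chain_one_side hc hnot with h | h
  · have := h q hq; omega
  · have := h p hp; omega

lemma exists_residue (m t i : ℕ) (ht : 0 < t) (hi : i < t) :
    ∃ c, m ≤ c ∧ c < m + t ∧ c % t = i := by
  by_cases h : t * (m / t) + i < m
  · refine ⟨t * (m / t) + i + t, by
      have := Nat.mod_lt m ht
      have hm := Nat.div_add_mod m t
      omega, by
      have hm := Nat.div_add_mod m t
      omega, ?_⟩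
    have : t * (m / t) + i + t = t * (m / t + 1) + i := by ring
    rw [this, Nat.mul_add_mod]
    exact Nat.mod_eq_of_lt hi
  · refine ⟨t * (m / t) + i, by omega, by
      have hm := Nat.div_add_mod m t
      have := Nat.mod_lt m ht
      omega, ?_⟩
    rw [Nat.mul_add_mod]
    exact Nat.mod_eq_of_lt hi


include hT in
lemma path_band_card {x y : X} (Q : T.Walk x y) (hQ : Q.IsPath) (ℓ h : ℕ)
    (hband : ∀ z ∈ Q.support, ℓ ≤ T.dist r z ∧ T.dist r z < ℓ + h) :
    Q.support.toFinset.card ≤ 2 * h - 1 := by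
  have hx : x ∈ Q.support := Walk.start_mem_support _
  have hne : (Q.support.toFinset.image (T.dist r)).Nonempty :=
    ⟨T.dist r x, Finset.mem_image_of_mem _ (by simpa using hx)⟩
  obtain ⟨z₀, hz₀mem, hz₀⟩ := Finset.mem_image.mp
    ((Q.support.toFinset.image (T.dist r)).min'_mem hne)
  rw [List.mem_toFinset] at hz₀mem
  have hmin : ∀ z' ∈ Q.support, T.dist r z₀ ≤ T.dist r z' := by
    intro z' hz'
    rw [hz₀]
    exact Finset.min'_le _ _ (Finset.mem_image_of_mem _ (by simpa using hz'))
  have h0 : z₀ ∈ (pth hT r x).support := min_mem_pth hT r Q hz₀mem hmin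
  have h0' : z₀ ∈ (pth hT r y).support := by
    refine min_mem_pth hT r Q.reverse ?_ ?_
    · rw [Walk.support_reverse, List.mem_reverse]; exact hz₀mem
    · intro z' hz'
      rw [Walk.support_reverse, List.mem_reverse] at hz'
      exact hmin z' hz'
  have e1 := dist_split hT r h0
  have e2 := dist_split hT r h0'
  have hlen : Q.length = T.dist x y := isPath_length_eq_dist hT hQ
  have htri : T.dist x y ≤ T.dist x z₀ + T.dist z₀ y := hT.isConnected.dist_triangle
  have hcx : T.dist x z₀ = T.dist z₀ x := dist_comm
  have hbx := hband x hx
  have hby := hband y (Walk.end_mem_support _)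
  have hbz := hband z₀ hz₀mem
  have hcard : Q.support.toFinset.card = Q.length + 1 := by
    rw [List.toFinset_card_of_nodup hQ.support_nodup, Walk.length_support]
  omega

lemma sum_bound (a t : ℕ) (ha : 2 ≤ a) (ht : 2 ≤ t) :
    ∑ j ∈ Finset.range t, ∑ i ∈ Finset.range (j+1), a ^ i ≤
      ∑ i ∈ Finset.range (2*t-1), a ^ i := by
  have h1 : ∑ j ∈ Finset.range t, ∑ i ∈ Finset.range (j+1), a ^ i ≤
      t * ∑ i ∈ Finset.range t, a ^ i := by
    have := Finset.sum_le_card_nsmul (Finset.range t)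
      (fun j => ∑ i ∈ Finset.range (j+1), a ^ i) (∑ i ∈ Finset.range t, a ^ i)
      (fun j hj => Finset.sum_le_sum_of_subset
        (Finset.range_subset_range.mpr (by simp at hj; omega)))
    simpa using this
  have h2 : t ≤ a ^ (t-1) := by
    have h2a : t ≤ 2 ^ (t-1) := by
      have := Nat.lt_two_pow_self (n := t-1)
      omega
    exact h2a.trans (Nat.pow_le_pow_left ha _)
  have h3 : t * ∑ i ∈ Finset.range t, a ^ i ≤ a ^ (t-1) * ∑ i ∈ Finset.range t, a ^ i :=
    Nat.mul_le_mul_right _ h2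
  have h4 : a ^ (t-1) * ∑ i ∈ Finset.range t, a ^ i = ∑ i ∈ Finset.range t, a ^ (t-1+i) := by
    rw [Finset.mul_sum]
    exact Finset.sum_congr rfl fun i _ => by rw [pow_add]
  have h5 : ∑ i ∈ Finset.range t, a ^ (t-1+i) = ∑ i ∈ Finset.Ico (t-1) (2*t-1), a ^ i := by
    rw [Finset.sum_Ico_eq_sum_range]
    have : 2*t-1 - (t-1) = t := by omega
    rw [this]
  have h6 : ∑ i ∈ Finset.Ico (t-1) (2*t-1), a ^ i ≤ ∑ i ∈ Finset.range (2*t-1), a ^ i := by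
    refine Finset.sum_le_sum_of_subset ?_
    intro i hi
    simp only [Finset.mem_Ico] at hi
    exact Finset.mem_range.mpr hi.2
  omega


include hT in
lemma core_walk {V : Type} [DecidableEq V] (G : SimpleGraph V) (B : X → Finset V)
    (hdomino : ∀ x y : X, ((B x) ∩ (B y)).Nonempty → x = y ∨ T.Adj x y)
    (hedges : ∀ u v : V, G.Adj u v → ∃ x : X, u ∈ B x ∧ v ∈ B x)
    (k t a : ℕ) (ha : a = (k+1)/2) (hwidth : ∀ x : X, (B x).card ≤ k + 1)
    (f : V → ℕ)
    (hfle : ∀ v x, v ∈ B x → f v ≤ T.dist r x)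
    (hfge : ∀ v x, v ∈ B x → T.dist r x ≤ f v + 1)
    {u v : V} (p : G.Walk u v) (hp : p.IsPath) (hL : 1 ≤ p.length)
    (m t' : ℕ) (hmle : ∀ x ∈ p.support, m ≤ f x)
    (hub : ∀ x ∈ p.support, f x + 2 ≤ m + t') :
    ∃ (x₀ y₀ : X) (Q : T.Walk x₀ y₀),
      (∀ z, Q.support.count z ≤ a) ∧
      (∀ z ∈ Q.support, m ≤ T.dist r z ∧ T.dist r z < m + t') ∧
      p.length + 1 ≤ (k+1) * Q.support.toFinset.card := by
  classical
  set L := p.length with hLdef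
  set vert : ℕ → V := fun j => p.support.getD j u with hvert
  have hsuplen : p.support.length = L + 1 := p.length_support
  have hvmem : ∀ j, j ≤ L → vert j ∈ p.support := by
    intro j hj
    rw [hvert]
    simp only
    rw [List.getD_eq_getElem _ _ (by omega)]
    exact List.getElem_mem _
  have hvinj : ∀ j j', j ≤ L → j' ≤ L → vert j = vert j' → j = j' := by
    intro j j' hj hj' heq
    simp only [hvert] at heq
    rw [List.getD_eq_getElem _ _ (by omega), List.getD_eq_getElem _ _ (by omega)] at heq
    exact (List.Nodup.getElem_inj_iff hp.support_nodup).mp heq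
  have hadjv : ∀ j, j < L → G.Adj (vert j) (vert (j+1)) := by
    intro j hj
    have hc := p.isChain_adj_support
    rw [List.isChain_iff_getElem] at hc
    have := hc j (by omega)
    simp only [hvert]
    rw [List.getD_eq_getElem _ _ (by omega), List.getD_eq_getElem _ _ (by omega)]
    simpa [List.get_eq_getElem] using this
  have hcarAux : ∀ j, ∃ x : X, j < L → vert j ∈ B x ∧ vert (j+1) ∈ B x := by
    intro j
    by_cases hj : j < L
    · obtain ⟨x, h1, h2⟩ := hedges _ _ (hadjv j hj)
      exact ⟨x, fun _ => ⟨h1, h2⟩⟩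
    · exact ⟨r, fun h => absurd h hj⟩
  choose c hc using hcarAux
  have hcband : ∀ j, j < L → m ≤ T.dist r (c j) ∧ T.dist r (c j) < m + t' := by
    intro j hj
    have h1 := (hc j hj).1
    have hle := hfle _ _ h1
    have hge := hfge _ _ h1
    have hm1 := hmle _ (hvmem j (by omega))
    have hm2 := hub _ (hvmem j (by omega))
    omega
  have hsteps : ∀ j, j < L - 1 → c j = c (j+1) ∨ T.Adj (c j) (c (j+1)) := by
    intro j hj
    have h1 := (hc j (by omega)).2
    have h2 := (hc (j+1) (by omega)).1
    exact hdomino _ _ ⟨vert (j+1), Finset.mem_inter.mpr ⟨h1, h2⟩⟩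
  obtain ⟨Q, hQcnt, hQmem⟩ := exists_dedup_walk (T := T) c (L-1) hsteps
  have hL1 : L - 1 + 1 = L := by omega
  rw [hL1] at hQcnt
  have hcount : ∀ z, Q.support.count z ≤ a := by
    intro z
    rw [hQcnt z]
    set F := (Finset.range L).filter (fun j => c j = z ∧ (j = 0 ∨ c (j-1) ≠ z)) with hF
    have hFL : ∀ j ∈ F, j < L := fun j hj => Finset.mem_range.mp (Finset.mem_filter.mp hj).1
    have hFz : ∀ j ∈ F, c j = z := fun j hj => (Finset.mem_filter.mp hj).2.1
    set A1 := F.image vert with hA1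
    set A2 := F.image (fun j => vert (j+1)) with hA2
    have hsub : A1 ∪ A2 ⊆ B z := by
      intro w hw
      rcases Finset.mem_union.mp hw with hw | hw
      · obtain ⟨j, hj, rfl⟩ := Finset.mem_image.mp hw
        exact hFz j hj ▸ (hc j (hFL j hj)).1
      · obtain ⟨j, hj, rfl⟩ := Finset.mem_image.mp hw
        exact hFz j hj ▸ (hc j (hFL j hj)).2
    have hc1 : A1.card = F.card := Finset.card_image_of_injOn
      (fun j hj j' hj' heq => hvinj _ _ (le_of_lt (hFL _ hj)) (le_of_lt (hFL _ hj')) heq)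
    have hc2 : A2.card = F.card := Finset.card_image_of_injOn
      (fun j hj j' hj' heq => by
        have := hvinj (j+1) (j'+1) (by have := hFL _ hj; omega) (by have := hFL _ hj'; omega) heq
        omega)
    have hdisj : Disjoint A1 A2 := by
      rw [Finset.disjoint_left]
      intro w hw1 hw2
      obtain ⟨j, hj, rfl⟩ := Finset.mem_image.mp hw1
      obtain ⟨j', hj', heq⟩ := Finset.mem_image.mp hw2
      have hjj : j = j' + 1 := by
        have hb1 : j' + 1 ≤ L := by have := hFL _ hj'; omega
        have hb2 : j ≤ L := le_of_lt (hFL _ hj)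
        have := hvinj (j'+1) j hb1 hb2 heq
        omega
      have hrs := (Finset.mem_filter.mp hj).2.2
      rcases hrs with h0 | hne
      · omega
      · apply hne
        rw [hjj]
        simp only [Nat.add_sub_cancel]
        exact hFz j' hj'
    have hcu : (A1 ∪ A2).card = 2 * F.card := by
      rw [Finset.card_union_of_disjoint hdisj, hc1, hc2]
      omega
    have hpairs : 2 * F.card ≤ (B z).card := hcu ▸ Finset.card_le_card hsub
    have hwz := hwidth z
    omega
  have hQband : ∀ z ∈ Q.support, m ≤ T.dist r z ∧ T.dist r z < m + t' := by
    intro z hz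
    have hpos : 0 < Q.support.count z := List.count_pos_iff.mpr hz
    rw [hQcnt z] at hpos
    obtain ⟨j, hj⟩ := Finset.card_pos.mp hpos
    have hj1 := Finset.mem_range.mp (Finset.mem_filter.mp hj).1
    have hj2 := (Finset.mem_filter.mp hj).2.1
    rw [← hj2]
    exact hcband j hj1
  refine ⟨_, _, Q, hcount, hQband, ?_⟩
  have hsubset : p.support.toFinset ⊆ Q.support.toFinset.biUnion (fun z => B z) := by
    intro w hw
    rw [List.mem_toFinset] at hw
    obtain ⟨i, hi, hgi⟩ := List.mem_iff_getElem.mp hw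
    have hwv : w = vert i := by
      rw [hvert]
      simp only
      rw [List.getD_eq_getElem _ _ hi, hgi]
    rcases Nat.lt_or_ge i L with hj' | hj'
    · refine Finset.mem_biUnion.mpr ⟨c i, ?_, ?_⟩
      · rw [List.mem_toFinset]; exact hQmem i (by omega)
      · rw [hwv]; exact (hc i hj').1
    · have hiL : i = L := by omega
      refine Finset.mem_biUnion.mpr ⟨c (L-1), ?_, ?_⟩
      · rw [List.mem_toFinset]; exact hQmem (L-1) (by omega)
      · rw [hwv, hiL, show L = L - 1 + 1 by omega]
        exact (hc (L-1) (by omega)).2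
  calc L + 1 = p.support.toFinset.card := by
        rw [List.toFinset_card_of_nodup hp.support_nodup, hsuplen]
    _ ≤ (Q.support.toFinset.biUnion (fun z => B z)).card := Finset.card_le_card hsubset
    _ ≤ ∑ z ∈ Q.support.toFinset, (B z).card := Finset.card_biUnion_le
    _ ≤ ∑ _z ∈ Q.support.toFinset, (k+1) := Finset.sum_le_sum fun z _ => hwidth z
    _ = Q.support.toFinset.card * (k+1) := by rw [Finset.sum_const, smul_eq_mul]
    _ = (k+1) * Q.support.toFinset.card := mul_comm _ _

end DominoAux

open DominoAux SimpleGraph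

/-- If a vertex-weighted graph has a domino tree decomposition (elongation at most 1)
of width at most `k` and `t ≥ 2`, then with `a = ⌈k/2⌉` it has a
`(t, (4t-3)(k+1))`-trimming if `a ≤ 1`, and a
`(t, (k+1)(a^{2t-2}(a+1) - 2)/(a-1))`-trimming if `a ≥ 2`. -/
theorem trimming_of_bounded_domino_treewidth {V : Type} [Fintype V]
    (G : SimpleGraph V) (w : V → ℝ) (hw : ∀ v, 0 ≤ w v)
    (k t : ℕ) (ht : 2 ≤ t)
    (D : TreeDecomp V G)
    (hwidth : ∀ x : D.X, (D.B x).card ≤ k + 1)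
    (hdomino : ∀ x y : D.X, ((D.B x) ∩ (D.B y)).Nonempty → x = y ∨ D.T.Adj x y)
    (a : ℕ) (ha : a = (k + 1) / 2) :
    (a ≤ 1 → ∃ U : Finset V,
      IsTrimming G w t (((4 * t - 3) * (k + 1) : ℕ) : ℝ) U) ∧
    (2 ≤ a → ∃ U : Finset V,
      IsTrimming G w t
        (((k : ℝ) + 1) * ((a : ℝ) ^ (2 * t - 2) * ((a : ℝ) + 1) - 2) /
          ((a : ℝ) - 1)) U) := by
  classical
  obtain ⟨r⟩ : Nonempty D.X := D.tree.isConnected.nonempty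
  have hQne : ∀ v : V, {n | ∃ x, v ∈ D.B x ∧ D.T.dist r x = n}.Nonempty := by
    intro v; obtain ⟨x, hx⟩ := D.cover v; exact ⟨_, x, hx, rfl⟩
  set f : V → ℕ := fun v => sInf {n | ∃ x, v ∈ D.B x ∧ D.T.dist r x = n} with hf
  have hfmem : ∀ v, ∃ x, v ∈ D.B x ∧ D.T.dist r x = f v := fun v => Nat.sInf_mem (hQne v)
  have hfle : ∀ (v : V) (x : D.X), v ∈ D.B x → f v ≤ D.T.dist r x := fun v x hx =>
    Nat.sInf_le ⟨x, hx, rfl⟩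
  have hfge : ∀ (v : V) (x : D.X), v ∈ D.B x → D.T.dist r x ≤ f v + 1 := by
    intro v x hx
    obtain ⟨x₀, hx₀, hx₀d⟩ := hfmem v
    rcases hdomino x₀ x ⟨v, Finset.mem_inter.mpr ⟨hx₀, hx⟩⟩ with h | h
    · rw [← h, hx₀d]; omega
    · have htri : D.T.dist r x ≤ D.T.dist r x₀ + D.T.dist x₀ x :=
        D.tree.isConnected.dist_triangle
      have h1 : D.T.dist x₀ x = 1 := SimpleGraph.dist_eq_one_iff_adj.mpr h
      omega
  have hstepf : ∀ u' v' : V, G.Adj u' v' → f u' ≤ f v' + 1 ∧ f v' ≤ f u' + 1 := by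
    intro u' v' hadj
    obtain ⟨x, hu, hv⟩ := D.edges u' v' hadj
    have h1 := hfle u' x hu
    have h2 := hfge u' x hu
    have h3 := hfle v' x hv
    have h4 := hfge v' x hv
    omega
  have hsel : ∃ i ∈ Finset.range t,
      (∑ v ∈ Finset.univ.filter (fun v => f v % t = i), w v) ≤ (∑ v, w v) / t := by
    refine Finset.exists_le_of_sum_le ⟨0, Finset.mem_range.mpr (by omega)⟩ ?_
    have hpart : ∑ i ∈ Finset.range t, ∑ v ∈ Finset.univ.filter (fun v => f v % t = i), w v
        = ∑ v, w v :=
      Finset.sum_fiberwise_of_maps_to (fun v _ => Finset.mem_range.mpr (Nat.mod_lt _ (by omega))) w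
    rw [hpart, Finset.sum_const, Finset.card_range, nsmul_eq_mul]
    rw [mul_div_cancel₀]
    exact_mod_cast (by omega : t ≠ 0)
  obtain ⟨i₀, hi₀, hUw⟩ := hsel
  set U := Finset.univ.filter (fun v => f v % t = i₀) with hU
  have hband : ∀ (u v : V) (p : G.Walk u v), p.IsPath → (∀ x ∈ p.support, x ∉ U) →
      ∃ m, (∀ x ∈ p.support, m ≤ f x) ∧ (∀ x ∈ p.support, f x + 2 ≤ m + t) := by
    intro u v p hp havoid
    have havoid' : ∀ x ∈ p.support, f x % t ≠ i₀ := by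
      intro x hx h
      exact havoid x hx (Finset.mem_filter.mpr ⟨Finset.mem_univ _, h⟩)
    have hfne : (p.support.toFinset.image f).Nonempty :=
      ⟨f u, Finset.mem_image_of_mem _ (by rw [List.mem_toFinset]; exact p.start_mem_support)⟩
    set m := (p.support.toFinset.image f).min' hfne with hm
    have hmle : ∀ x ∈ p.support, m ≤ f x := fun x hx =>
      Finset.min'_le _ _ (Finset.mem_image_of_mem _ (by rwa [List.mem_toFinset]))
    refine ⟨m, hmle, ?_⟩
    intro x hx
    by_contra hgt
    push_neg at hgt
    obtain ⟨vmin, hvmin_mem, hvmin⟩ := Finset.mem_image.mp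
      ((p.support.toFinset.image f).min'_mem hfne)
    rw [List.mem_toFinset] at hvmin_mem
    have hchain : List.Chain' (fun p q => p ≤ q + 1 ∧ q ≤ p + 1) (p.support.map f) := by
      show List.IsChain _ _; rw [List.isChain_map]
      exact List.IsChain.imp (fun a b hadj => hstepf a b hadj) p.isChain_adj_support
    obtain ⟨c₀, hc1, hc2, hc3⟩ := exists_residue m t i₀ (by omega) (Finset.mem_range.mp hi₀)
    have hvmin' : f vmin = m := by rw [hvmin, ← hm]
    have hmm : m ∈ p.support.map f := by
      rw [← hvmin']
      exact List.mem_map_of_mem hvmin_mem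
    have hxm : f x ∈ p.support.map f := List.mem_map_of_mem hx
    have hcmem : c₀ ∈ p.support.map f := chain_ivt hchain hmm hxm hc1 (by omega)
    obtain ⟨v₀, hv₀mem, hv₀⟩ := List.mem_map.mp hcmem
    exact havoid' v₀ hv₀mem (by rw [hv₀, hc3])
  constructor
  · -- a ≤ 1
    intro ha1
    refine ⟨U, hUw, ?_⟩
    intro u v p hp hlen
    by_contra hno
    push_neg at hno
    have hgnat : ((4*t-3)*(k+1) : ℕ) < p.length := by exact_mod_cast hlen
    have hL1 : 1 ≤ p.length := by
      have h1 : 1 ≤ (4*t-3)*(k+1) :=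
        Nat.one_le_iff_ne_zero.mpr (Nat.mul_ne_zero (by omega) (by omega))
      omega
    obtain ⟨m, hmle, hub⟩ := hband u v p hp hno
    rcases Nat.lt_or_ge a 1 with ha0 | ha1'
    · have hk : k = 0 := by omega
      have hedge : ∃ u' v' : V, G.Adj u' v' := by
        cases p with
        | nil => simp at hL1
        | cons h q => exact ⟨_, _, h⟩
      obtain ⟨u', v', hadj⟩ := hedge
      obtain ⟨x, h1, h2⟩ := D.edges u' v' hadj
      have hcard : 2 ≤ (D.B x).card := Finset.one_lt_card.mpr ⟨u', h1, v', h2, hadj.ne⟩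
      have := hwidth x
      omega
    · have haa : a = 1 := by omega
      obtain ⟨x₀, y₀, Q, hcnt, hQband, hcov⟩ :=
        core_walk D.tree r G D.B hdomino D.edges k t a ha hwidth f hfle hfge p hp hL1
          m t hmle hub
      have hQpath : Q.IsPath := by
        rw [SimpleGraph.Walk.isPath_def]
        exact List.nodup_iff_count_le_one.mpr (fun z => (hcnt z).trans (by omega))
      have hnodes := path_band_card D.tree r Q hQpath m t hQband
      have hfin : p.length + 1 ≤ (k+1) * (2*t-1) :=
        le_trans hcov (Nat.mul_le_mul_left _ hnodes)
      have h2 : (k+1) * (2*t-1) ≤ (4*t-3)*(k+1) := by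
        rw [mul_comm]
        exact Nat.mul_le_mul_right _ (by omega)
      exact absurd (lt_of_le_of_lt (le_trans hfin h2) hgnat)
        (by omega)
  · -- 2 ≤ a
    intro ha2
    refine ⟨U, hUw, ?_⟩
    intro u v p hp hlen
    by_contra hno
    push_neg at hno
    obtain ⟨m, hmle, hub⟩ := hband u v p hp hno
    have hα2 : (2:ℝ) ≤ (a:ℝ) := by exact_mod_cast ha2
    have hα1 : (a:ℝ) ≠ 1 := by linarith
    have h1e : (1:ℝ) ≤ (a:ℝ) ^ (2*t-2) := one_le_pow₀ (by linarith)
    have hg0 : (0:ℝ) ≤ ((k:ℝ)+1) * ((a:ℝ)^(2*t-2) * ((a:ℝ)+1) - 2) / ((a:ℝ) - 1) := by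
      apply div_nonneg
      · apply mul_nonneg (by positivity)
        nlinarith
      · linarith
    have hL1 : 1 ≤ p.length := by
      by_contra h
      push_neg at h
      have h0 : p.length = 0 := by omega
      rw [h0] at hlen
      simp only [Nat.cast_zero] at hlen
      linarith
    obtain ⟨x₀, y₀, Q, hcnt, hQband, hcov⟩ :=
      core_walk D.tree r G D.B hdomino D.edges k t a ha hwidth f hfle hfge p hp hL1
        m t hmle hub
    have hnodes := walk_band_count D.tree r Q a t m hcnt hQband
    have hsum := sum_bound a t ha2 ht
    have hNn : p.length + 1 ≤ (k+1) * ∑ i ∈ Finset.range (2*t-1), a ^ i :=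
      hcov.trans (Nat.mul_le_mul_left _ (hnodes.trans hsum))
    have hS2R : ((∑ i ∈ Finset.range (2*t-1), a ^ i : ℕ) : ℝ)
        = ((a:ℝ)^(2*t-1) - 1)/((a:ℝ) - 1) := by
      push_cast
      exact geom_sum_eq hα1 _
    have hnum : (a:ℝ)^(2*t-1) - 1 ≤ (a:ℝ)^(2*t-2)*((a:ℝ)+1) - 2 := by
      have hee : 2*t-1 = (2*t-2)+1 := by omega
      rw [hee, pow_succ]
      nlinarith
    have hfinal : ((k:ℝ)+1) * (((a:ℝ)^(2*t-1) - 1)/((a:ℝ)-1))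
        ≤ ((k:ℝ)+1) * ((a:ℝ)^(2*t-2)*((a:ℝ)+1) - 2) / ((a:ℝ)-1) := by
      rw [mul_div_assoc]
      apply mul_le_mul_of_nonneg_left _ (by positivity)
      apply div_le_div_of_nonneg_right hnum (by linarith)
    have hcast : ((p.length:ℝ)) + 1 ≤ ((k:ℝ)+1) * (((a:ℝ)^(2*t-1) - 1)/((a:ℝ)-1)) := by
      calc ((p.length:ℝ)) + 1 = ((p.length + 1 : ℕ):ℝ) := by push_cast; ring
        _ ≤ (((k+1) * ∑ i ∈ Finset.range (2*t-1), a ^ i : ℕ):ℝ) := Nat.cast_le.mpr hNn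
        _ = (((k+1):ℕ):ℝ) * ((∑ i ∈ Finset.range (2*t-1), a ^ i : ℕ):ℝ) := by
            rw [Nat.cast_mul]
        _ = ((k:ℝ)+1) * (((a:ℝ)^(2*t-1) - 1)/((a:ℝ)-1)) := by
            rw [hS2R]; push_cast; ring
    linarith
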